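/- arXiv:2407.02930 — 4 statements merged into one kernel-verified Lean document; each statement's English description precedes it below -/
import Mathlib

section
/- In the oblivious model, for every m, k ∈ {1,2} and every t ∈ ℕ, E[h_{mk}(t)] ≤ ∑_{j=0}^{t} (1 − b_k r_k)^j. -/
/-- Index type for the family of primitive random variables:
`inl (m, k, t)` indexes the request variable of user `m`, CP `k`, time `t`;
`inr (n, k, t)` indexes the command indicator of eRRH `n`, CP `k`, time `t`. -/
abbrev FranIdx : Type := (Fin 2 × Fin 2 × ℕ) ⊕ (Fin 2 × Fin 2 × ℕ)

/-- Codomain of each primitive random variable. -/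
def FranType : FranIdx → Type
  | .inl _ => Fin 3
  | .inr _ => Bool

instance FranType.instMeasurableSpace : ∀ i, MeasurableSpace (FranType i)
  | .inl _ => inferInstanceAs (MeasurableSpace (Fin 3))
  | .inr _ => inferInstanceAs (MeasurableSpace Bool)

/-- Oblivious 2-user/2-eRRH/2-CP F-RAN model. -/
structure ObliviousFRAN where
  /-- sample space -/
  Ω : Type
  [mΩ : MeasurableSpace Ω]
  μ : MeasureTheory.Measure Ω
  isProb : MeasureTheory.IsProbabilityMeasure μ
  /-- request rates: `bsplit k n = b_k^{(n+1)}` -/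
  bsplit : Fin 2 → Fin 2 → ℝ
  bsplit_nonneg : ∀ k n, 0 ≤ bsplit k n
  bsum_le_one : ∀ k, bsplit k 0 + bsplit k 1 ≤ 1
  /-- command rates -/
  r : Fin 2 → ℝ
  r_nonneg : ∀ k, 0 ≤ r k
  r_le_one : ∀ k, r k ≤ 1
  /-- request variables: value `0` = no request, value `n.succ` = request sent to eRRH `n` -/
  R : Fin 2 → Fin 2 → ℕ → Ω → Fin 3
  /-- command indicators -/
  γ : Fin 2 → Fin 2 → ℕ → Ω → Bool
  R_meas : ∀ m k t, Measurable (R m k t)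
  γ_meas : ∀ n k t, Measurable (γ n k t)
  R_law : ∀ m k t (n : Fin 2), μ {ω | R m k t ω = n.succ} = ENNReal.ofReal (bsplit k n)
  R_law0 : ∀ m k t, μ {ω | R m k t ω = 0} = ENNReal.ofReal (1 - (bsplit k 0 + bsplit k 1))
  γ_law : ∀ n k t, μ {ω | γ n k t ω = true} = ENNReal.ofReal (r k)
  /-- all the primitive random variables are mutually independent -/
  indep : ProbabilityTheory.iIndepFun (m := fun i => FranType.instMeasurableSpace i)
      (fun i => Sum.rec (motive := fun j => Ω → FranType j)
        (fun p => R p.1 p.2.1 p.2.2) (fun p => γ p.1 p.2.1 p.2.2) i) μ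

attribute [instance] ObliviousFRAN.mΩ

open MeasureTheory ProbabilityTheory Filter

namespace ObliviousFRAN

variable (M : ObliviousFRAN)

/-- AoI of CP `k` at eRRH `n`. -/
def g (n k : Fin 2) : ℕ → M.Ω → ℕ
  | 0 => fun _ => 1
  | t + 1 => fun ω =>
      if M.γ n k t ω = true ∧ ∃ m : Fin 2, M.R m k t ω = n.succ then 1
      else g n k t ω + 1

/-- AoI of CP `k` at user `m`. -/
def h (m k : Fin 2) : ℕ → M.Ω → ℕ
  | 0 => fun _ => 1
  | t + 1 => fun ω =>
      if M.R m k t ω = 0 then h m k t ω + 1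
      else if M.R m k t ω = 1 then
        (if M.γ 0 k t ω = true then 1 else min (h m k t ω) (M.g 0 k t ω) + 1)
      else
        (if M.γ 1 k t ω = true then 1 else min (h m k t ω) (M.g 1 k t ω) + 1)

/-- Expected AoI of CP `k` at eRRH `n` at time `t`. -/
noncomputable def Eg (n k : Fin 2) (t : ℕ) : ℝ := ∫ ω, (M.g n k t ω : ℝ) ∂M.μ

/-- Expected AoI of CP `k` at user `m` at time `t`. -/
noncomputable def Eh (m k : Fin 2) (t : ℕ) : ℝ := ∫ ω, (M.h m k t ω : ℝ) ∂M.μ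

/-- Total request rate of a user for CP `k`: `b_k = b_k^{(1)} + b_k^{(2)}`. -/
def bk (k : Fin 2) : ℝ := M.bsplit k 0 + M.bsplit k 1

/-- `ζ_{nk} = 1 - (1 - b_k^{(n)})^2`. -/
def ζ (n k : Fin 2) : ℝ := 1 - (1 - M.bsplit k n) ^ 2

end ObliviousFRAN

namespace ObliviousFRAN

variable (M : ObliviousFRAN)

/-- The family of primitive random variables, as a dependent function. -/
def fam : ∀ i : FranIdx, M.Ω → FranType i :=
  fun i => Sum.rec (motive := fun j => M.Ω → FranType j)
    (fun p => M.R p.1 p.2.1 p.2.2) (fun p => M.γ p.1 p.2.1 p.2.2) i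

lemma fam_meas : ∀ i, Measurable (M.fam i)
  | .inl p => M.R_meas p.1 p.2.1 p.2.2
  | .inr p => M.γ_meas p.1 p.2.1 p.2.2

lemma indep' : iIndepFun (m := fun i => FranType.instMeasurableSpace i) M.fam M.μ := M.indep

/-- Index set of all variables at times `< t`. -/
def idxS (t : ℕ) : Finset FranIdx :=
  (Finset.univ ×ˢ Finset.univ ×ˢ Finset.range t).disjSum
    (Finset.univ ×ˢ Finset.univ ×ˢ Finset.range t)

/-- Index set of the variables `R m k t`, `γ 0 k t`, `γ 1 k t`. -/
def idxT (m k : Fin 2) (t : ℕ) : Finset FranIdx :=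
  ({(m, k, t)} : Finset (Fin 2 × Fin 2 × ℕ)).disjSum
    ({(0, k, t), (1, k, t)} : Finset (Fin 2 × Fin 2 × ℕ))

lemma disj_ST (m k : Fin 2) (t : ℕ) : Disjoint (idxS t) (idxT m k t) := by
  rw [Finset.disjoint_left]
  rintro (⟨a, b, c⟩ | ⟨a, b, c⟩) hx hy <;>
    simp only [idxS, idxT, Finset.inl_mem_disjSum, Finset.inr_mem_disjSum,
      Finset.mem_product, Finset.mem_range, Finset.mem_singleton, Finset.mem_insert,
      Prod.mk.injEq] at hx hy <;> omega

/-- σ-algebra generated by the variables indexed by `S`. -/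
def Fs (S : Finset FranIdx) : MeasurableSpace M.Ω :=
  MeasurableSpace.comap (fun ω (i : S) => M.fam i ω) MeasurableSpace.pi

lemma meas_fam_Fs {S : Finset FranIdx} {i : FranIdx} (hi : i ∈ S) :
    Measurable[M.Fs S] (M.fam i) := by
  have h1 : Measurable[M.Fs S] (fun ω (j : S) => M.fam j ω) :=
    Measurable.of_comap_le le_rfl
  exact (measurable_pi_apply (⟨i, hi⟩ : S)).comp h1

lemma mem_idxS_inl {t s : ℕ} (hs : s < t) (m k : Fin 2) :
    (Sum.inl (m, k, s) : FranIdx) ∈ idxS t := by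
  simp [idxS, hs]

lemma mem_idxS_inr {t s : ℕ} (hs : s < t) (n k : Fin 2) :
    (Sum.inr (n, k, s) : FranIdx) ∈ idxS t := by
  simp [idxS, hs]

lemma R_meas_F {t s : ℕ} (hs : s < t) (m k : Fin 2) :
    Measurable[M.Fs (idxS t)] (M.R m k s) :=
  M.meas_fam_Fs (mem_idxS_inl hs m k)

lemma γ_meas_F {t s : ℕ} (hs : s < t) (n k : Fin 2) :
    Measurable[M.Fs (idxS t)] (M.γ n k s) :=
  M.meas_fam_Fs (mem_idxS_inr hs n k)

lemma g_meas_F (n k : Fin 2) : ∀ t T, t ≤ T → Measurable[M.Fs (idxS T)] (M.g n k t)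
  | 0, T, _ => measurable_const
  | (t+1), T, hle => by
    have ht : t < T := hle
    have IH := g_meas_F n k t T ht.le
    show Measurable[M.Fs (idxS T)] (fun ω =>
      if M.γ n k t ω = true ∧ ∃ m : Fin 2, M.R m k t ω = n.succ then 1
      else M.g n k t ω + 1)
    have hset : MeasurableSet[M.Fs (idxS T)]
        {ω | M.γ n k t ω = true ∧ ∃ m : Fin 2, M.R m k t ω = n.succ} := by
      have heq : {ω | M.γ n k t ω = true ∧ ∃ m : Fin 2, M.R m k t ω = n.succ}
          = (M.γ n k t ⁻¹' {true}) ∩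
            ((M.R 0 k t ⁻¹' {n.succ}) ∪ (M.R 1 k t ⁻¹' {n.succ})) := by
        ext ω
        simp [Fin.exists_fin_two]
      rw [heq]
      exact ((M.γ_meas_F ht n k) (measurableSet_singleton _)).inter
        (((M.R_meas_F ht 0 k) (measurableSet_singleton _)).union
          ((M.R_meas_F ht 1 k) (measurableSet_singleton _)))
    exact Measurable.ite hset measurable_const (IH.add measurable_const)

lemma h_meas_F (m k : Fin 2) : ∀ t T, t ≤ T → Measurable[M.Fs (idxS T)] (M.h m k t)
  | 0, T, _ => measurable_const
  | (t+1), T, hle => by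
    have ht : t < T := hle
    have IH := h_meas_F m k t T ht.le
    have IHg0 := M.g_meas_F 0 k t T ht.le
    have IHg1 := M.g_meas_F 1 k t T ht.le
    show Measurable[M.Fs (idxS T)] (fun ω =>
      if M.R m k t ω = 0 then M.h m k t ω + 1
      else if M.R m k t ω = 1 then
        (if M.γ 0 k t ω = true then 1 else min (M.h m k t ω) (M.g 0 k t ω) + 1)
      else
        (if M.γ 1 k t ω = true then 1 else min (M.h m k t ω) (M.g 1 k t ω) + 1))
    have hR0 : MeasurableSet[M.Fs (idxS T)] {ω | M.R m k t ω = 0} :=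
      (M.R_meas_F ht m k) (measurableSet_singleton _)
    have hR1 : MeasurableSet[M.Fs (idxS T)] {ω | M.R m k t ω = 1} :=
      (M.R_meas_F ht m k) (measurableSet_singleton _)
    have hγ0 : MeasurableSet[M.Fs (idxS T)] {ω | M.γ 0 k t ω = true} :=
      (M.γ_meas_F ht 0 k) (measurableSet_singleton _)
    have hγ1 : MeasurableSet[M.Fs (idxS T)] {ω | M.γ 1 k t ω = true} :=
      (M.γ_meas_F ht 1 k) (measurableSet_singleton _)
    exact Measurable.ite hR0 (IH.add measurable_const)
      (Measurable.ite hR1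
        (Measurable.ite hγ0 measurable_const ((IH.min IHg0).add measurable_const))
        (Measurable.ite hγ1 measurable_const ((IH.min IHg1).add measurable_const)))

lemma Fs_le (S : Finset FranIdx) : M.Fs S ≤ M.mΩ :=
  Measurable.comap_le (measurable_pi_lambda _ (fun i => M.fam_meas i))

lemma h_meas (m k : Fin 2) (t : ℕ) : Measurable (M.h m k t) :=
  (M.h_meas_F m k t t le_rfl).mono (M.Fs_le _) le_rfl

lemma h_le (m k : Fin 2) : ∀ t (ω : M.Ω), M.h m k t ω ≤ t + 1
  | 0, ω => le_rfl
  | (t+1), ω => by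
    have IH := h_le m k t ω
    show (if M.R m k t ω = 0 then M.h m k t ω + 1
      else if M.R m k t ω = 1 then
        (if M.γ 0 k t ω = true then 1 else min (M.h m k t ω) (M.g 0 k t ω) + 1)
      else
        (if M.γ 1 k t ω = true then 1 else min (M.h m k t ω) (M.g 1 k t ω) + 1)) ≤ t + 1 + 1
    split_ifs <;> omega

lemma integrable_h (m k : Fin 2) (t : ℕ) :
    Integrable (fun ω => (M.h m k t ω : ℝ)) M.μ := by
  have := M.isProb
  refine Integrable.mono' (integrable_const ((t : ℝ) + 1)) ?_ ?_
  · exact (measurable_from_nat.comp (M.h_meas m k t)).aestronglyMeasurable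
  · refine Filter.Eventually.of_forall fun ω => ?_
    rw [Real.norm_eq_abs, abs_of_nonneg (by positivity)]
    exact_mod_cast M.h_le m k t ω

/-- The "success" event at time `t` for user `m`, CP `k`. -/
def succSet (m k : Fin 2) (t : ℕ) : Set M.Ω :=
  {ω | ∃ n : Fin 2, M.R m k t ω = n.succ ∧ M.γ n k t ω = true}

lemma succSet_eq (m k : Fin 2) (t : ℕ) :
    M.succSet m k t = (M.R m k t ⁻¹' {(0 : Fin 2).succ} ∩ M.γ 0 k t ⁻¹' {true})
      ∪ (M.R m k t ⁻¹' {(1 : Fin 2).succ} ∩ M.γ 1 k t ⁻¹' {true}) := by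
  ext ω
  simp [succSet, Fin.exists_fin_two]

lemma succSet_meas_G (m k : Fin 2) (t : ℕ) :
    MeasurableSet[M.Fs (idxT m k t)] (M.succSet m k t) := by
  have hR : Measurable[M.Fs (idxT m k t)] (M.R m k t) :=
    M.meas_fam_Fs (i := Sum.inl (m, k, t)) (by simp [idxT])
  have hγ0 : Measurable[M.Fs (idxT m k t)] (M.γ 0 k t) :=
    M.meas_fam_Fs (i := Sum.inr (0, k, t)) (by simp [idxT])
  have hγ1 : Measurable[M.Fs (idxT m k t)] (M.γ 1 k t) :=
    M.meas_fam_Fs (i := Sum.inr (1, k, t)) (by simp [idxT])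
  rw [succSet_eq]
  exact ((hR (measurableSet_singleton _)).inter (hγ0 (measurableSet_singleton _))).union
    ((hR (measurableSet_singleton _)).inter (hγ1 (measurableSet_singleton _)))

lemma succSet_meas (m k : Fin 2) (t : ℕ) : MeasurableSet (M.succSet m k t) :=
  M.Fs_le _ _ (M.succSet_meas_G m k t)

lemma measure_succSet (m k : Fin 2) (t : ℕ) :
    M.μ (M.succSet m k t) = ENNReal.ofReal (M.bk k * M.r k) := by
  have hdisj : Disjoint (M.R m k t ⁻¹' {(0 : Fin 2).succ} ∩ M.γ 0 k t ⁻¹' {true})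
      (M.R m k t ⁻¹' {(1 : Fin 2).succ} ∩ M.γ 1 k t ⁻¹' {true}) := by
    rw [Set.disjoint_left]
    rintro ω ⟨h1, -⟩ ⟨h2, -⟩
    simp only [Set.mem_preimage, Set.mem_singleton_iff] at h1 h2
    rw [h1] at h2
    exact absurd h2 (by decide)
  have hmeas2 : MeasurableSet (M.R m k t ⁻¹' {(1 : Fin 2).succ} ∩ M.γ 1 k t ⁻¹' {true}) :=
    ((M.R_meas m k t) (measurableSet_singleton _)).inter
      ((M.γ_meas 1 k t) (measurableSet_singleton _))
  have hpiece : ∀ n : Fin 2,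
      M.μ (M.R m k t ⁻¹' {n.succ} ∩ M.γ n k t ⁻¹' {true})
        = ENNReal.ofReal (M.bsplit k n) * ENNReal.ofReal (M.r k) := by
    intro n
    have hne : (Sum.inl (m, k, t) : FranIdx) ≠ Sum.inr (n, k, t) := by simp
    have hindep : IndepFun (M.R m k t) (M.γ n k t) M.μ :=
      M.indep'.indepFun hne
    have := hindep.measure_inter_preimage_eq_mul {n.succ} {true}
      (measurableSet_singleton _) (measurableSet_singleton _)
    rw [this]
    have hR : M.R m k t ⁻¹' {n.succ} = {ω | M.R m k t ω = n.succ} := rfl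
    have hγ : M.γ n k t ⁻¹' {true} = {ω | M.γ n k t ω = true} := rfl
    rw [hR, hγ, M.R_law m k t n, M.γ_law n k t]
  rw [succSet_eq, measure_union hdisj hmeas2, hpiece 0, hpiece 1,
    ← ENNReal.ofReal_mul (M.bsplit_nonneg k 0), ← ENNReal.ofReal_mul (M.bsplit_nonneg k 1),
    ← ENNReal.ofReal_add (by have := M.bsplit_nonneg k 0; have := M.r_nonneg k; positivity)
      (by have := M.bsplit_nonneg k 1; have := M.r_nonneg k; positivity)]
  congr 1
  simp only [bk]
  ring

lemma indep_hI (m k : Fin 2) (t : ℕ) :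
    IndepFun (Set.indicator (M.succSet m k t)ᶜ (fun _ => (1 : ℝ)))
      (fun ω => (M.h m k t ω : ℝ) + 1) M.μ := by
  have key : Indep (M.Fs (idxT m k t)) (M.Fs (idxS t)) M.μ :=
    (M.indep'.indepFun_finset (idxS t) (idxT m k t) (disj_ST m k t) M.fam_meas).symm
  have hX : Measurable[M.Fs (idxT m k t)]
      (Set.indicator (M.succSet m k t)ᶜ (fun _ => (1 : ℝ))) :=
    measurable_const.indicator (M.succSet_meas_G m k t).compl
  have hY : Measurable[M.Fs (idxS t)] (fun ω => (M.h m k t ω : ℝ) + 1) :=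
    (measurable_from_nat.comp (M.h_meas_F m k t t le_rfl)).add measurable_const
  exact indep_of_indep_of_le_left (indep_of_indep_of_le_right key hY.comap_le) hX.comap_le

lemma fin3_cases (x : Fin 3) (h0 : x ≠ 0) (h1 : x ≠ 1) : x = 2 := by
  fin_cases x <;> simp_all

lemma h_succ_pointwise (m k : Fin 2) (t : ℕ) (ω : M.Ω) :
    (M.h m k (t+1) ω : ℝ) ≤
      Set.indicator (M.succSet m k t)ᶜ (fun _ => (1 : ℝ)) ω * ((M.h m k t ω : ℝ) + 1)
      + Set.indicator (M.succSet m k t) (fun _ => (1 : ℝ)) ω := by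
  by_cases hs : ω ∈ M.succSet m k t
  · obtain ⟨n, hR, hγ⟩ := id hs
    have hval : M.h m k (t+1) ω = 1 := by
      show (if M.R m k t ω = 0 then M.h m k t ω + 1
        else if M.R m k t ω = 1 then
          (if M.γ 0 k t ω = true then 1 else min (M.h m k t ω) (M.g 0 k t ω) + 1)
        else
          (if M.γ 1 k t ω = true then 1 else min (M.h m k t ω) (M.g 1 k t ω) + 1)) = 1
      fin_cases n
      · have h1 : M.R m k t ω = 1 := by rw [hR]; decide
        have hγ0 : M.γ 0 k t ω = true := hγ
        rw [if_neg (by rw [h1]; decide), if_pos h1, if_pos hγ0]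
      · have h2 : M.R m k t ω = 2 := by rw [hR]; decide
        have hγ1 : M.γ 1 k t ω = true := hγ
        rw [if_neg (by rw [h2]; decide), if_neg (by rw [h2]; decide), if_pos hγ1]
    rw [hval, Set.indicator_of_notMem (by simpa using hs), Set.indicator_of_mem hs]
    norm_num
  · have hnat : M.h m k (t+1) ω ≤ M.h m k t ω + 1 := by
      show (if M.R m k t ω = 0 then M.h m k t ω + 1
        else if M.R m k t ω = 1 then
          (if M.γ 0 k t ω = true then 1 else min (M.h m k t ω) (M.g 0 k t ω) + 1)
        else
          (if M.γ 1 k t ω = true then 1 else min (M.h m k t ω) (M.g 1 k t ω) + 1))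
        ≤ M.h m k t ω + 1
      split_ifs with hR0 hR1 hγ0 hγ1
      · exact le_rfl
      · exact absurd (show ω ∈ M.succSet m k t from ⟨0, by rw [hR1]; decide, hγ0⟩) hs
      · omega
      · exact absurd (show ω ∈ M.succSet m k t from
          ⟨1, by rw [fin3_cases _ hR0 hR1]; decide, hγ1⟩) hs
      · omega
    rw [Set.indicator_of_mem (by simpa using hs), Set.indicator_of_notMem hs]
    simp only [one_mul, add_zero]
    exact_mod_cast hnat

lemma Eh_succ_le (m k : Fin 2) (t : ℕ) :
    M.Eh m k (t+1) ≤ (1 - M.bk k * M.r k) * (M.Eh m k t + 1) + M.bk k * M.r k := by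
  have hprob := M.isProb
  have hbr0 : 0 ≤ M.bk k * M.r k :=
    mul_nonneg (add_nonneg (M.bsplit_nonneg k 0) (M.bsplit_nonneg k 1)) (M.r_nonneg k)
  have hbr1 : M.bk k * M.r k ≤ 1 :=
    mul_le_one₀ (M.bsum_le_one k) (M.r_nonneg k) (M.r_le_one k)
  set S := M.succSet m k t with hS
  have hSmeas := M.succSet_meas m k t
  have hintI : Integrable (Set.indicator Sᶜ (fun _ => (1 : ℝ))) M.μ :=
    (integrable_const (1 : ℝ)).indicator hSmeas.compl
  have hintH : Integrable (fun ω => (M.h m k t ω : ℝ) + 1) M.μ :=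
    (M.integrable_h m k t).add (integrable_const 1)
  have hintIS : Integrable (Set.indicator S (fun _ => (1 : ℝ))) M.μ :=
    (integrable_const (1 : ℝ)).indicator hSmeas
  have hintprod : Integrable
      (fun ω => Set.indicator Sᶜ (fun _ => (1 : ℝ)) ω * ((M.h m k t ω : ℝ) + 1)) M.μ := by
    refine Integrable.mono' (hintH.abs) ?_ ?_
    · exact (((measurable_const.indicator hSmeas.compl)).mul
        ((measurable_from_nat.comp (M.h_meas m k t)).add measurable_const)).aestronglyMeasurable
    · refine Filter.Eventually.of_forall fun ω => ?_
      rw [Real.norm_eq_abs, abs_mul]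
      by_cases hω : ω ∈ Sᶜ <;>
        simp [Set.indicator_of_mem, Set.indicator_of_notMem, hω, abs_of_nonneg,
          le_abs_self]
  have hmono : M.Eh m k (t+1) ≤
      ∫ ω, (Set.indicator Sᶜ (fun _ => (1 : ℝ)) ω * ((M.h m k t ω : ℝ) + 1)
        + Set.indicator S (fun _ => (1 : ℝ)) ω) ∂M.μ := by
    refine integral_mono (M.integrable_h m k (t+1)) (hintprod.add hintIS) ?_
    exact fun ω => M.h_succ_pointwise m k t ω
  rw [integral_add hintprod hintIS] at hmono
  have hmul : ∫ ω, Set.indicator Sᶜ (fun _ => (1 : ℝ)) ω * ((M.h m k t ω : ℝ) + 1) ∂M.μ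
      = (∫ ω, Set.indicator Sᶜ (fun _ => (1 : ℝ)) ω ∂M.μ)
        * ∫ ω, ((M.h m k t ω : ℝ) + 1) ∂M.μ :=
    (M.indep_hI m k t).integral_mul_eq_mul_integral hintI.aestronglyMeasurable
      hintH.aestronglyMeasurable
  have hmuS : M.μ S = ENNReal.ofReal (M.bk k * M.r k) := M.measure_succSet m k t
  have hmuSc : M.μ Sᶜ = ENNReal.ofReal (1 - M.bk k * M.r k) := by
    rw [measure_compl hSmeas (measure_ne_top _ _), hmuS, measure_univ,
      ENNReal.ofReal_sub _ hbr0, ENNReal.ofReal_one]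
  have hI1 : ∫ ω, Set.indicator Sᶜ (fun _ => (1 : ℝ)) ω ∂M.μ = 1 - M.bk k * M.r k := by
    rw [integral_indicator_const (1 : ℝ) hSmeas.compl, measureReal_def, hmuSc, smul_eq_mul, mul_one,
      ENNReal.toReal_ofReal (by linarith)]
  have hI2 : ∫ ω, Set.indicator S (fun _ => (1 : ℝ)) ω ∂M.μ = M.bk k * M.r k := by
    rw [integral_indicator_const (1 : ℝ) hSmeas, measureReal_def, hmuS, smul_eq_mul, mul_one,
      ENNReal.toReal_ofReal hbr0]
  have hI3 : ∫ ω, ((M.h m k t ω : ℝ) + 1) ∂M.μ = M.Eh m k t + 1 := by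
    rw [integral_add (M.integrable_h m k t) (integrable_const 1), integral_const,
      probReal_univ, one_smul]
    rfl
  rw [hmul, hI1, hI2, hI3] at hmono
  exact hmono

end ObliviousFRAN

/-- `E[h_{mk}(t)] ≤ ∑_{j=0}^t (1 - b_k r_k)^j`. -/
theorem stmt2 (M : ObliviousFRAN) (m k : Fin 2) (t : ℕ) :
    M.Eh m k t ≤ ∑ j ∈ Finset.range (t + 1), (1 - M.bk k * M.r k) ^ j := by
  have hprob := M.isProb
  have hbr0 : 0 ≤ M.bk k * M.r k :=
    mul_nonneg (add_nonneg (M.bsplit_nonneg k 0) (M.bsplit_nonneg k 1)) (M.r_nonneg k)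
  have hbr1 : M.bk k * M.r k ≤ 1 :=
    mul_le_one₀ (M.bsum_le_one k) (M.r_nonneg k) (M.r_le_one k)
  induction t with
  | zero =>
    have : M.Eh m k 0 = 1 := by
      simp [ObliviousFRAN.Eh, ObliviousFRAN.h, measure_univ]
    rw [this]
    simp
  | succ t IH =>
    have hstep := M.Eh_succ_le m k t
    have hq0 : (0 : ℝ) ≤ 1 - M.bk k * M.r k := by linarith
    calc M.Eh m k (t+1)
        ≤ (1 - M.bk k * M.r k) * (M.Eh m k t + 1) + M.bk k * M.r k := hstep
      _ ≤ (1 - M.bk k * M.r k) * ((∑ j ∈ Finset.range (t + 1), (1 - M.bk k * M.r k) ^ j) + 1)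
            + M.bk k * M.r k := by
          have := mul_le_mul_of_nonneg_left (add_le_add_right IH 1) hq0
          linarith
      _ = ∑ j ∈ Finset.range (t + 1 + 1), (1 - M.bk k * M.r k) ^ j := by
          rw [Finset.sum_range_succ' _ (t+1)]
          simp only [pow_succ, pow_zero]
          rw [← Finset.sum_mul]
          ring
end

section
/- Let b ∈ (0,1], r ∈ (0,1), a := r³b − 4r²b + 2r² + 3rb − 2r, and P(x) := a·x² − a·b·x + (−r²b³ + 2r²b² + rb³ − rb² − 3rb + 3). Then: (1) in the oblivious model with parameters b_1 = b, r_1 = r, b_1^{(1)} = x and b_1^{(2)} = b − x, one has E[h_{11}(2)] = P(x) for every x ∈ [0,b]; (2) a = r(1−r)((3−r)b − 2); (3) P(x) = P(b−x) for all x; (4) if b > 2/(3−r), then P attains its minimum over [0,b] uniquely at x = b/2; if b < 2/(3−r), then the minimum of P over [0,b] is attained exactly at the points x = 0 and x = b; if b = 2/(3−r), then P is constant on [0,b]. -/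
open MeasureTheory ProbabilityTheory Filter

namespace Stmt10Aux

open MeasureTheory ProbabilityTheory

def h1val (R0 : Fin 3) (g0 g1 : Bool) : ℕ :=
  if R0 = 0 then 2 else if R0 = 1 then (if g0 = true then 1 else 2)
  else (if g1 = true then 1 else 2)
def G0val (R0 R1 : Fin 3) (g0 : Bool) : ℕ := if g0 = true ∧ (R0 = 1 ∨ R1 = 1) then 1 else 2
def G1val (R0 R1 : Fin 3) (g1 : Bool) : ℕ := if g1 = true ∧ (R0 = 2 ∨ R1 = 2) then 1 else 2

/-- deterministic value of `h 0 0 2` as a function of the seven primitive variables -/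
def f2 (R0 R1 Rp : Fin 3) (g0 g1 c0 c1 : Bool) : ℕ :=
  if Rp = 0 then h1val R0 g0 g1 + 1
  else if Rp = 1 then (if c0 = true then 1 else min (h1val R0 g0 g1) (G0val R0 R1 g0) + 1)
  else (if c1 = true then 1 else min (h1val R0 g0 g1) (G1val R0 R1 g1) + 1)

lemma h2_eq (M : ObliviousFRAN) (ω : M.Ω) :
    M.h 0 0 2 ω = f2 (M.R 0 0 0 ω) (M.R 1 0 0 ω) (M.R 0 0 1 ω)
      (M.γ 0 0 0 ω) (M.γ 1 0 0 ω) (M.γ 0 0 1 ω) (M.γ 1 0 1 ω) := by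
  simp only [ObliviousFRAN.h, ObliviousFRAN.g, Fin.exists_fin_two,
    Fin.succ_zero_eq_one, Fin.succ_one_eq_two]
  generalize M.R 0 0 0 ω = R0
  generalize M.R 1 0 0 ω = R1
  generalize M.R 0 0 1 ω = Rp
  generalize M.γ 0 0 0 ω = g0
  generalize M.γ 1 0 0 ω = g1
  generalize M.γ 0 0 1 ω = c0
  generalize M.γ 1 0 1 ω = c1
  revert R0 R1 Rp g0 g1 c0 c1
  decide

end Stmt10Aux
namespace Stmt10Aux

def pR (x y : ℝ) : Fin 3 → ℝ := fun u => if u = 0 then 1 - (x + y) else if u = 1 then x else y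
def pγ (r : ℝ) : Bool → ℝ := fun c => if c then r else 1 - r

variable (M : ObliviousFRAN)

lemma single_R (m : Fin 2) (t : ℕ) (u : Fin 3) :
    M.μ {ω | M.R m 0 t ω = u} = ENNReal.ofReal (pR (M.bsplit 0 0) (M.bsplit 0 1) u) := by
  match u with
  | 0 => simpa [pR] using M.R_law0 m 0 t
  | 1 => simpa [pR] using M.R_law m 0 t 0
  | 2 => simpa [pR] using M.R_law m 0 t 1

lemma single_γ (n : Fin 2) (t : ℕ) (c : Bool) :
    M.μ {ω | M.γ n 0 t ω = c} = ENNReal.ofReal (pγ (M.r 0) c) := by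
  haveI := M.isProb
  cases c
  · have hmeas : MeasurableSet {ω | M.γ n 0 t ω = true} :=
      M.γ_meas n 0 t (measurableSet_singleton true)
    have hc : {ω | M.γ n 0 t ω = false} = {ω | M.γ n 0 t ω = true}ᶜ := by
      ext ω; simp
    rw [hc, measure_compl hmeas (measure_ne_top _ _), M.γ_law, measure_univ]
    rw [show pγ (M.r 0) false = 1 - M.r 0 from rfl,
      ENNReal.ofReal_sub _ (M.r_nonneg 0), ENNReal.ofReal_one]
  · simpa [pγ] using M.γ_law n 0 t

end Stmt10Aux
namespace Stmt10Aux

open MeasureTheory ProbabilityTheory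

variable (M : ObliviousFRAN)

lemma atom (u v w : Fin 3) (c d e f' : Bool) :
    M.μ {ω | M.R 0 0 0 ω = u ∧ M.R 1 0 0 ω = v ∧ M.R 0 0 1 ω = w ∧
        M.γ 0 0 0 ω = c ∧ M.γ 1 0 0 ω = d ∧ M.γ 0 0 1 ω = e ∧ M.γ 1 0 1 ω = f'} =
      M.μ {ω | M.R 0 0 0 ω = u} * M.μ {ω | M.R 1 0 0 ω = v} * M.μ {ω | M.R 0 0 1 ω = w} *
      M.μ {ω | M.γ 0 0 0 ω = c} * M.μ {ω | M.γ 1 0 0 ω = d} * M.μ {ω | M.γ 0 0 1 ω = e} *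
      M.μ {ω | M.γ 1 0 1 ω = f'} := by
  classical
  set X : ∀ i : FranIdx, M.Ω → FranType i :=
    fun i => Sum.rec (motive := fun j => M.Ω → FranType j)
      (fun p => M.R p.1 p.2.1 p.2.2) (fun p => M.γ p.1 p.2.1 p.2.2) i with hX
  set sets : ∀ i : FranIdx, Set (FranType i) := fun i =>
    Sum.rec (motive := fun j => Set (FranType j))
      (fun p => {if p = (0, 0, 0) then u else if p = (1, 0, 0) then v else w})
      (fun p => {if p = (0, 0, 0) then c else if p = (1, 0, 0) then d
                 else if p = (0, 0, 1) then e else f'}) i with hsets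
  set S7 : Finset FranIdx :=
    {.inl (0, 0, 0), .inl (1, 0, 0), .inl (0, 0, 1),
     .inr (0, 0, 0), .inr (1, 0, 0), .inr (0, 0, 1), .inr (1, 0, 1)} with hS7
  have H : ∀ i ∈ S7, MeasurableSet[FranType.instMeasurableSpace i] (sets i) := by
    intro i _
    cases i with
    | inl p => exact measurableSet_singleton (α := Fin 3) _
    | inr p => exact measurableSet_singleton (α := Bool) _
  have key := M.indep.measure_inter_preimage_eq_mul S7 H
  have hL : (⋂ i ∈ S7, X i ⁻¹' sets i) =
      {ω | M.R 0 0 0 ω = u ∧ M.R 1 0 0 ω = v ∧ M.R 0 0 1 ω = w ∧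
        M.γ 0 0 0 ω = c ∧ M.γ 1 0 0 ω = d ∧ M.γ 0 0 1 ω = e ∧ M.γ 1 0 1 ω = f'} := by
    ext ω
    simp only [hS7, Finset.set_biInter_insert, Finset.set_biInter_singleton,
      Set.mem_inter_iff, Set.mem_preimage, hX, hsets, Set.mem_singleton_iff,
      Set.mem_setOf_eq]
    norm_num
    exact Iff.rfl
  have hR : (∏ i ∈ S7, M.μ (X i ⁻¹' sets i)) =
      M.μ {ω | M.R 0 0 0 ω = u} * M.μ {ω | M.R 1 0 0 ω = v} * M.μ {ω | M.R 0 0 1 ω = w} *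
      M.μ {ω | M.γ 0 0 0 ω = c} * M.μ {ω | M.γ 1 0 0 ω = d} * M.μ {ω | M.γ 0 0 1 ω = e} *
      M.μ {ω | M.γ 1 0 1 ω = f'} := by
    rw [hS7]
    rw [Finset.prod_insert (by decide), Finset.prod_insert (by decide),
      Finset.prod_insert (by decide), Finset.prod_insert (by decide),
      Finset.prod_insert (by decide), Finset.prod_insert (by decide),
      Finset.prod_singleton]
    have e1 : X (.inl (0,0,0)) ⁻¹' sets (.inl (0,0,0)) = {ω | M.R 0 0 0 ω = u} := by
      ext ω; simp [hX, hsets]; exact Iff.rfl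
    have e2 : X (.inl (1,0,0)) ⁻¹' sets (.inl (1,0,0)) = {ω | M.R 1 0 0 ω = v} := by
      ext ω; simp [hX, hsets]; exact Iff.rfl
    have e3 : X (.inl (0,0,1)) ⁻¹' sets (.inl (0,0,1)) = {ω | M.R 0 0 1 ω = w} := by
      ext ω; simp [hX, hsets]; exact Iff.rfl
    have e4 : X (.inr (0,0,0)) ⁻¹' sets (.inr (0,0,0)) = {ω | M.γ 0 0 0 ω = c} := by
      ext ω; simp [hX, hsets]; exact Iff.rfl
    have e5 : X (.inr (1,0,0)) ⁻¹' sets (.inr (1,0,0)) = {ω | M.γ 1 0 0 ω = d} := by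
      ext ω; simp [hX, hsets]; exact Iff.rfl
    have e6 : X (.inr (0,0,1)) ⁻¹' sets (.inr (0,0,1)) = {ω | M.γ 0 0 1 ω = e} := by
      ext ω; simp [hX, hsets]; exact Iff.rfl
    have e7 : X (.inr (1,0,1)) ⁻¹' sets (.inr (1,0,1)) = {ω | M.γ 1 0 1 ω = f'} := by
      ext ω; simp [hX, hsets]; exact Iff.rfl
    rw [e1, e2, e3, e4, e5, e6, e7]
    ring
  rw [← hL, key, hR]

end Stmt10Aux
namespace Stmt10Aux

open MeasureTheory ProbabilityTheory

abbrev S : Type := Fin 3 × Fin 3 × Fin 3 × Bool × Bool × Bool × Bool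

variable (M : ObliviousFRAN)

lemma pR_nonneg (u : Fin 3) : 0 ≤ pR (M.bsplit 0 0) (M.bsplit 0 1) u := by
  have h0 := M.bsplit_nonneg 0 0
  have h1 := M.bsplit_nonneg 0 1
  have h2 := M.bsum_le_one 0
  fin_cases u <;> simp [pR] <;> linarith

lemma pγ_nonneg (c : Bool) : 0 ≤ pγ (M.r 0) c := by
  have h0 := M.r_nonneg 0
  have h1 := M.r_le_one 0
  cases c <;> simp [pγ] <;> linarith

lemma Eh2 : M.Eh 0 0 2 = ∑ s : S,
    (pR (M.bsplit 0 0) (M.bsplit 0 1) s.1 * pR (M.bsplit 0 0) (M.bsplit 0 1) s.2.1 *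
     pR (M.bsplit 0 0) (M.bsplit 0 1) s.2.2.1 * pγ (M.r 0) s.2.2.2.1 * pγ (M.r 0) s.2.2.2.2.1 *
     pγ (M.r 0) s.2.2.2.2.2.1 * pγ (M.r 0) s.2.2.2.2.2.2) *
    (f2 s.1 s.2.1 s.2.2.1 s.2.2.2.1 s.2.2.2.2.1 s.2.2.2.2.2.1 s.2.2.2.2.2.2 : ℝ) := by
  classical
  haveI := M.isProb
  set φ : M.Ω → S := fun ω => (M.R 0 0 0 ω, M.R 1 0 0 ω, M.R 0 0 1 ω,
    M.γ 0 0 0 ω, M.γ 1 0 0 ω, M.γ 0 0 1 ω, M.γ 1 0 1 ω) with hφdef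
  have hφ : Measurable φ :=
    (M.R_meas 0 0 0).prodMk ((M.R_meas 1 0 0).prodMk ((M.R_meas 0 0 1).prodMk
      ((M.γ_meas 0 0 0).prodMk ((M.γ_meas 1 0 0).prodMk
      ((M.γ_meas 0 0 1).prodMk (M.γ_meas 1 0 1))))))
  set g : S → ℝ := fun s =>
    (f2 s.1 s.2.1 s.2.2.1 s.2.2.2.1 s.2.2.2.2.1 s.2.2.2.2.2.1 s.2.2.2.2.2.2 : ℝ) with hgdef
  have h1 : M.Eh 0 0 2 = ∫ ω, g (φ ω) ∂M.μ := by
    unfold ObliviousFRAN.Eh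
    congr 1
    funext ω
    rw [hφdef, hgdef]
    simp only [h2_eq M ω]
  rw [h1, ← integral_map hφ.aemeasurable (measurable_of_countable g).aestronglyMeasurable]
  haveI : IsProbabilityMeasure (M.μ.map φ) := Measure.isProbabilityMeasure_map hφ.aemeasurable
  rw [integral_fintype Integrable.of_finite]
  refine Finset.sum_congr rfl fun s _ => ?_
  obtain ⟨u, v, w, c, d, e, f'⟩ := s
  have hmap : (M.μ.map φ) {(u, v, w, c, d, e, f')} =
      ENNReal.ofReal (pR (M.bsplit 0 0) (M.bsplit 0 1) u) *
      ENNReal.ofReal (pR (M.bsplit 0 0) (M.bsplit 0 1) v) *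
      ENNReal.ofReal (pR (M.bsplit 0 0) (M.bsplit 0 1) w) *
      ENNReal.ofReal (pγ (M.r 0) c) * ENNReal.ofReal (pγ (M.r 0) d) *
      ENNReal.ofReal (pγ (M.r 0) e) * ENNReal.ofReal (pγ (M.r 0) f') := by
    rw [Measure.map_apply hφ (measurableSet_singleton _)]
    have hpre : φ ⁻¹' {(u, v, w, c, d, e, f')} =
        {ω | M.R 0 0 0 ω = u ∧ M.R 1 0 0 ω = v ∧ M.R 0 0 1 ω = w ∧
          M.γ 0 0 0 ω = c ∧ M.γ 1 0 0 ω = d ∧ M.γ 0 0 1 ω = e ∧ M.γ 1 0 1 ω = f'} := by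
      ext ω; simp [hφdef, Prod.ext_iff, and_assoc]
    rw [hpre, atom M u v w c d e f', single_R M 0 0 u, single_R M 1 0 v, single_R M 0 1 w,
      single_γ M 0 0 c, single_γ M 1 0 d, single_γ M 0 1 e, single_γ M 1 1 f']
  rw [measureReal_def, hmap]
  rw [ENNReal.toReal_mul, ENNReal.toReal_mul, ENNReal.toReal_mul, ENNReal.toReal_mul,
    ENNReal.toReal_mul, ENNReal.toReal_mul,
    ENNReal.toReal_ofReal (pR_nonneg M u), ENNReal.toReal_ofReal (pR_nonneg M v),
    ENNReal.toReal_ofReal (pR_nonneg M w), ENNReal.toReal_ofReal (pγ_nonneg M c),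
    ENNReal.toReal_ofReal (pγ_nonneg M d), ENNReal.toReal_ofReal (pγ_nonneg M e),
    ENNReal.toReal_ofReal (pγ_nonneg M f')]
  rw [smul_eq_mul, hgdef]

end Stmt10Aux
namespace Stmt10Aux

def T (b r x : ℝ) (h1 G0 G1 : ℕ) : ℝ :=
  (1 - b) * ((h1 : ℝ) + 1) + x * (r + (1 - r) * (((min h1 G0 : ℕ) : ℝ) + 1))
    + (b - x) * (r + (1 - r) * (((min h1 G1 : ℕ) : ℝ) + 1))

set_option maxHeartbeats 1000000 in
lemma inner5 (b r x : ℝ) (R0 R1 : Fin 3) :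
    ∑ t : Fin 3 × Bool × Bool × Bool × Bool,
      pR x (b - x) t.1 * pγ r t.2.1 * pγ r t.2.2.1 * pγ r t.2.2.2.1 * pγ r t.2.2.2.2 *
        (f2 R0 R1 t.1 t.2.1 t.2.2.1 t.2.2.2.1 t.2.2.2.2 : ℝ) =
    ∑ g : Bool × Bool, pγ r g.1 * pγ r g.2 *
      T b r x (h1val R0 g.1 g.2) (G0val R0 R1 g.1) (G1val R0 R1 g.2) := by
  simp only [Fintype.sum_prod_type, Fin.sum_univ_three, Fintype.sum_bool, f2, pR, pγ, T]
  norm_num [Fin.ext_iff, Nat.cast_min]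
  ring

set_option maxHeartbeats 1000000 in
lemma sum_eval (b r x : ℝ) :
    (∑ s : Fin 3 × Fin 3 × Fin 3 × Bool × Bool × Bool × Bool,
      (pR x (b - x) s.1 * pR x (b - x) s.2.1 * pR x (b - x) s.2.2.1 *
       pγ r s.2.2.2.1 * pγ r s.2.2.2.2.1 * pγ r s.2.2.2.2.2.1 * pγ r s.2.2.2.2.2.2) *
      (f2 s.1 s.2.1 s.2.2.1 s.2.2.2.1 s.2.2.2.2.1 s.2.2.2.2.2.1 s.2.2.2.2.2.2 : ℝ)) =
    (r ^ 3 * b - 4 * r ^ 2 * b + 2 * r ^ 2 + 3 * r * b - 2 * r) * x ^ 2 -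
      (r ^ 3 * b - 4 * r ^ 2 * b + 2 * r ^ 2 + 3 * r * b - 2 * r) * b * x +
      (-(r ^ 2 * b ^ 3) + 2 * r ^ 2 * b ^ 2 + r * b ^ 3 - r * b ^ 2 - 3 * r * b + 3) := by
  have key : ∀ R0 R1 : Fin 3,
      (∑ t : Fin 3 × Bool × Bool × Bool × Bool,
        (pR x (b - x) R0 * pR x (b - x) R1 * pR x (b - x) t.1 *
         pγ r t.2.1 * pγ r t.2.2.1 * pγ r t.2.2.2.1 * pγ r t.2.2.2.2) *
        (f2 R0 R1 t.1 t.2.1 t.2.2.1 t.2.2.2.1 t.2.2.2.2 : ℝ)) =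
      pR x (b - x) R0 * pR x (b - x) R1 *
        ∑ g : Bool × Bool, pγ r g.1 * pγ r g.2 *
          T b r x (h1val R0 g.1 g.2) (G0val R0 R1 g.1) (G1val R0 R1 g.2) := by
    intro R0 R1
    rw [← inner5 b r x R0 R1, Finset.mul_sum]
    exact Finset.sum_congr rfl fun t _ => by ring
  have peel1 : (∑ s : Fin 3 × Fin 3 × Fin 3 × Bool × Bool × Bool × Bool,
      (pR x (b - x) s.1 * pR x (b - x) s.2.1 * pR x (b - x) s.2.2.1 *
       pγ r s.2.2.2.1 * pγ r s.2.2.2.2.1 * pγ r s.2.2.2.2.2.1 * pγ r s.2.2.2.2.2.2) *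
      (f2 s.1 s.2.1 s.2.2.1 s.2.2.2.1 s.2.2.2.2.1 s.2.2.2.2.2.1 s.2.2.2.2.2.2 : ℝ)) =
      ∑ R0 : Fin 3, ∑ R1 : Fin 3, pR x (b - x) R0 * pR x (b - x) R1 *
        ∑ g : Bool × Bool, pγ r g.1 * pγ r g.2 *
          T b r x (h1val R0 g.1 g.2) (G0val R0 R1 g.1) (G1val R0 R1 g.2) := by
    rw [Fintype.sum_prod_type]
    refine Finset.sum_congr rfl fun R0 _ => ?_
    rw [Fintype.sum_prod_type]
    exact Finset.sum_congr rfl fun R1 _ => key R0 R1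
  rw [peel1]
  simp only [Fintype.sum_prod_type, Fin.sum_univ_three, Fintype.sum_bool,
    pR, pγ, T, h1val, G0val, G1val]
  norm_num [Fin.ext_iff, Nat.cast_min]
  ring

end Stmt10Aux
/-- the explicit quadratic `P(x) = E[h_{11}(2)]` as a function of
the split `x = b_1^{(1)}`, its symmetry, and the location of its minima on
`[0, b]` according to the sign of `b - 2/(3-r)`. -/
theorem stmt10 (b r : ℝ) (hb : b ∈ Set.Ioc (0 : ℝ) 1) (hr : r ∈ Set.Ioo (0 : ℝ) 1)
    (a : ℝ) (ha : a = r ^ 3 * b - 4 * r ^ 2 * b + 2 * r ^ 2 + 3 * r * b - 2 * r)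
    (P : ℝ → ℝ)
    (hP : P = fun x => a * x ^ 2 - a * b * x +
      (-(r ^ 2 * b ^ 3) + 2 * r ^ 2 * b ^ 2 + r * b ^ 3 - r * b ^ 2 - 3 * r * b + 3)) :
    (∀ x ∈ Set.Icc (0 : ℝ) b, ∀ M : ObliviousFRAN,
        M.bsplit 0 0 = x → M.bsplit 0 1 = b - x → M.r 0 = r →
        M.Eh 0 0 2 = P x) ∧
    a = r * (1 - r) * ((3 - r) * b - 2) ∧
    (∀ x : ℝ, P x = P (b - x)) ∧
    ((b > 2 / (3 - r) → ∀ x ∈ Set.Icc (0 : ℝ) b, x ≠ b / 2 → P (b / 2) < P x) ∧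
     (b < 2 / (3 - r) →
        P 0 = P b ∧ ∀ x ∈ Set.Icc (0 : ℝ) b, x ≠ 0 → x ≠ b → P 0 < P x) ∧
     (b = 2 / (3 - r) → ∀ x ∈ Set.Icc (0 : ℝ) b, P x = P 0)) := by
  obtain ⟨hb0, hb1⟩ := hb
  obtain ⟨hr0, hr1⟩ := hr
  have hc : (0:ℝ) < 3 - r := by linarith
  have ha' : a = r * (1 - r) * ((3 - r) * b - 2) := by rw [ha]; ring
  refine ⟨?_, ha', ?_, ?_, ?_, ?_⟩
  · intro x hx M hM0 hM1 hMr
    rw [Stmt10Aux.Eh2 M, hM0, hM1, hMr, Stmt10Aux.sum_eval b r x]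
    simp only [hP]
    rw [ha]
  · intro x; rw [hP]; ring
  · intro hbig x hx hxne
    have ha2 : 0 < a := by
      rw [gt_iff_lt, div_lt_iff₀ hc] at hbig
      rw [ha']
      nlinarith [mul_pos hr0 (by linarith : (0:ℝ) < 1 - r)]
    have hdiff : P x = P (b/2) + a * (x - b/2)^2 := by rw [hP]; ring
    have hne : x - b/2 ≠ 0 := sub_ne_zero.mpr hxne
    have hsq : 0 < (x - b/2)^2 := lt_of_le_of_ne (sq_nonneg _) (Ne.symm (pow_ne_zero 2 hne))
    rw [hdiff]
    nlinarith [mul_pos ha2 hsq]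
  · intro hsmall
    have ha2 : a < 0 := by
      rw [lt_div_iff₀ hc] at hsmall
      rw [ha']
      nlinarith [mul_pos hr0 (by linarith : (0:ℝ) < 1 - r)]
    refine ⟨by rw [hP]; ring, ?_⟩
    intro x hx hx0 hxb
    have hxpos : 0 < x := lt_of_le_of_ne hx.1 (Ne.symm hx0)
    have hbx : 0 < b - x := sub_pos.mpr (lt_of_le_of_ne hx.2 hxb)
    have hdiff : P x = P 0 + a * x * (x - b) := by rw [hP]; ring
    rw [hdiff]
    nlinarith [mul_pos (mul_pos (neg_pos.mpr ha2) hxpos) hbx]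
  · intro hbeq x hx
    have h2 : (3 - r) * b = 2 := by rw [hbeq]; field_simp
    have ha0 : a = 0 := by rw [ha', h2]; ring
    simp only [hP]
    rw [ha0]; ring
end

section
/- Let b ∈ (0,2) and r ∈ (0,2). The function F(x,s) := 1/x + 1/(b−x) + 1/(s·x·(2−x)) + 1/((r−s)·(b−x)·(2−(b−x))) is convex on the open rectangle (0,b) × (0,r), and (x,s) = (b/2, r/2) is its unique global minimum point on this domain. -/
lemma amgm3 (x y z : ℝ) (hx:0<x) (hy:0<y) (hz:0<z) : 3*(x*y*z) ≤ x^2*y+x*y^2+z^3 := by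
  have hxy : 0 < x*y := mul_pos hx hy
  set m := Real.sqrt (x*y) with hmdef
  have hm0 : 0 < m := Real.sqrt_pos.2 hxy
  have hm2 : m^2 = x*y := Real.sq_sqrt hxy.le
  have hpos : 0 < 2*m + x + y := by positivity
  have hsum : 2*m ≤ x+y := by nlinarith [sq_nonneg (x-y)]
  have hc1 : m^3 = x*y*m := by rw [pow_succ, hm2]
  have h1 : 2*(x*y)*m ≤ x^2*y + x*y^2 := by nlinarith [mul_le_mul_of_nonneg_left hsum hxy.le]
  have h2 : 0 ≤ (z-m)^2*(z+2*m) := by positivity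
  nlinarith [h1, h2, hm2, hc1, mul_pos hxy hz, mul_le_mul_of_nonneg_right hm2.le hz.le, mul_le_mul_of_nonneg_right hm2.ge hz.le]

lemma B1pos (a b c d : ℝ) (ha:0<a) (hb:0<b) (hc:0<c) (hd:0<d) :
    3*(a*b*(c*d)) ≤ c*d*(a*d+b*c) + (a*b)^2 := by
  have h := amgm3 (a*d) (b*c) (a*b) (by positivity) (by positivity) (by positivity)
  nlinarith [h, mul_pos ha hb]

lemma aux1 (a b c d t u : ℝ) (ha:0<a) (hb:0<b) (hc:0<c) (hd:0<d)
    (ht:0≤t) (hu:0≤u) (htu:t+u=1) :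
    1/((t*a+u*c)*(t*b+u*d)) ≤ t*(1/(a*b)) + u*(1/(c*d)) := by
  have hA : 0 < t*a+u*c := by
    rcases ht.lt_or_eq with h | h
    · exact add_pos_of_pos_of_nonneg (mul_pos h ha) (mul_nonneg hu hc.le)
    · have hu1 : u = 1 := by linarith
      simpa [← h, hu1] using hc
  have hB : 0 < t*b+u*d := by
    rcases ht.lt_or_eq with h | h
    · exact add_pos_of_pos_of_nonneg (mul_pos h hb) (mul_nonneg hu hd.le)
    · have hu1 : u = 1 := by linarith
      simpa [← h, hu1] using hd
  have hab : 0 < a*b := mul_pos ha hb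
  have hcd : 0 < c*d := mul_pos hc hd
  rw [mul_one_div, mul_one_div, div_add_div _ _ hab.ne' hcd.ne',
    div_le_div_iff₀ (by positivity) (by positivity)]
  have hB1 := B1pos a b c d ha hb hc hd
  have hB2 := B1pos c d a b hc hd ha hb
  have h1 : 0 ≤ t^2*u*((c*d*(a*d+b*c) + (a*b)^2) - 3*(a*b*(c*d))) :=
    mul_nonneg (by positivity) (by linarith)
  have h2 : 0 ≤ t*u^2*((a*b*(c*b+d*a) + (c*d)^2) - 3*(c*d*(a*b))) :=
    mul_nonneg (by positivity) (by linarith)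
  have hcube : a*b*(c*d)*((t+u)^3) = a*b*(c*d) := by rw [htu]; ring
  nlinarith [h1, h2, hcube]

/-- convexity of `p ↦ 1/(f p * g p)` for affine positive `f g`. -/
lemma convexTerm {S : Set (ℝ×ℝ)} (hS : Convex ℝ S) (f g : ℝ×ℝ → ℝ)
    (hf : ∀ p q : ℝ×ℝ, ∀ t u : ℝ, t+u=1 → f (t•p+u•q) = t * f p + u * f q)
    (hg : ∀ p q : ℝ×ℝ, ∀ t u : ℝ, t+u=1 → g (t•p+u•q) = t * g p + u * g q)
    (hfpos : ∀ p ∈ S, 0 < f p) (hgpos : ∀ p ∈ S, 0 < g p) :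
    ConvexOn ℝ S (fun p => 1/(f p * g p)) := by
  refine ⟨hS, fun p hp q hq t u ht hu htu => ?_⟩
  simp only [smul_eq_mul]
  rw [hf p q t u htu, hg p q t u htu]
  exact aux1 _ _ _ _ _ _ (hfpos p hp) (hgpos p hp) (hfpos q hq) (hgpos q hq) ht hu htu

lemma convexOn_congr' {S : Set (ℝ×ℝ)} {f g : ℝ×ℝ → ℝ} (hf : ConvexOn ℝ S f)
    (h : ∀ p ∈ S, f p = g p) : ConvexOn ℝ S g := by
  refine ⟨hf.1, fun p hp q hq t u ht hu htu => ?_⟩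
  rw [← h p hp, ← h q hq, ← h _ (hf.1 hp hq ht hu htu)]
  exact hf.2 hp hq ht hu htu

lemma L1 (x y : ℝ) (hx:0<x) (hy:0<y) : 4/(x+y) ≤ 1/x + 1/y := by
  rw [div_add_div _ _ hx.ne' hy.ne', div_le_div_iff₀ (by positivity) (by positivity)]
  nlinarith [sq_nonneg (x-y)]

lemma L1s (x y : ℝ) (hx:0<x) (hy:0<y) (hxy : x ≠ y) : 4/(x+y) < 1/x + 1/y := by
  rw [div_add_div _ _ hx.ne' hy.ne', div_lt_div_iff₀ (by positivity) (by positivity)]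
  have h : 0 < (x-y)^2 := by
    have := sub_ne_zero.2 hxy; positivity
  nlinarith [h]

lemma L2 (s t u v : ℝ) (hs:0<s) (ht:0<t) (hu:0<u) (hv:0<v) :
    8/((s+t)*(u+v)) ≤ 1/(s*u) + 1/(t*v) := by
  rw [div_add_div _ _ (by positivity) (by positivity),
    div_le_div_iff₀ (by positivity) (by positivity)]
  nlinarith [sq_nonneg (s*u-t*v), mul_nonneg (mul_nonneg hu.le hv.le) (sq_nonneg (s-t)),
    mul_nonneg (mul_nonneg hs.le ht.le) (sq_nonneg (u-v))]

lemma L2s (s t u v : ℝ) (hs:0<s) (ht:0<t) (hu:0<u) (hv:0<v) (hst : s ≠ t) :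
    8/((s+t)*(u+v)) < 1/(s*u) + 1/(t*v) := by
  rw [div_add_div _ _ (by positivity) (by positivity),
    div_lt_div_iff₀ (by positivity) (by positivity)]
  have h : 0 < u*v*(s-t)^2 := by
    have := sub_ne_zero.2 hst; positivity
  nlinarith [sq_nonneg (s*u-t*v), h,
    mul_nonneg (mul_nonneg hs.le ht.le) (sq_nonneg (u-v))]

set_option maxHeartbeats 2000000 in
/-- convexity of
`F(x,s) = 1/x + 1/(b-x) + 1/(s x (2-x)) + 1/((r-s)(b-x)(2-(b-x)))`
on `(0,b) × (0,r)` and uniqueness of its global minimum at `(b/2, r/2)`. -/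
theorem stmt12 (b r : ℝ) (hb : b ∈ Set.Ioo (0 : ℝ) 2) (hr : r ∈ Set.Ioo (0 : ℝ) 2)
    (F : ℝ × ℝ → ℝ)
    (hF : F = fun p => 1 / p.1 + 1 / (b - p.1) + 1 / (p.2 * p.1 * (2 - p.1))
      + 1 / ((r - p.2) * (b - p.1) * (2 - (b - p.1)))) :
    ConvexOn ℝ (Set.Ioo (0 : ℝ) b ×ˢ Set.Ioo (0 : ℝ) r) F ∧
    (b / 2, r / 2) ∈ Set.Ioo (0 : ℝ) b ×ˢ Set.Ioo (0 : ℝ) r ∧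
    ∀ p ∈ Set.Ioo (0 : ℝ) b ×ˢ Set.Ioo (0 : ℝ) r,
      p ≠ (b / 2, r / 2) → F (b / 2, r / 2) < F p := by
  obtain ⟨hb0, hb2⟩ := hb
  obtain ⟨hr0, hr2⟩ := hr
  set S : Set (ℝ×ℝ) := Set.Ioo (0 : ℝ) b ×ˢ Set.Ioo (0 : ℝ) r with hSdef
  have hmem : ∀ p : ℝ×ℝ, p ∈ S → 0 < p.1 ∧ p.1 < b ∧ 0 < p.2 ∧ p.2 < r := by
    intro p hp
    obtain ⟨⟨h1, h2⟩, ⟨h3, h4⟩⟩ := hp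
    exact ⟨h1, h2, h3, h4⟩
  have hSconv : Convex ℝ S := (convex_Ioo 0 b).prod (convex_Ioo 0 r)
  -- affine properties
  have hfst : ∀ p q : ℝ×ℝ, ∀ t u : ℝ, t+u=1 → (t•p+u•q).1 = t * p.1 + u * q.1 :=
    fun p q t u htu => rfl
  have hsnd : ∀ p q : ℝ×ℝ, ∀ t u : ℝ, t+u=1 → (t•p+u•q).2 = t * p.2 + u * q.2 :=
    fun p q t u htu => rfl
  have haff1 : ∀ p q : ℝ×ℝ, ∀ t u : ℝ, t+u=1 →
      b - (t•p+u•q).1 = t * (b - p.1) + u * (b - q.1) := by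
    intro p q t u htu
    rw [hfst p q t u htu]; linear_combination (-b)*htu
  have haff2 : ∀ p q : ℝ×ℝ, ∀ t u : ℝ, t+u=1 →
      2 - (t•p+u•q).1 = t * (2 - p.1) + u * (2 - q.1) := by
    intro p q t u htu
    rw [hfst p q t u htu]; linear_combination (-2:ℝ)*htu
  have haff3 : ∀ p q : ℝ×ℝ, ∀ t u : ℝ, t+u=1 →
      r - (t•p+u•q).2 = t * (r - p.2) + u * (r - q.2) := by
    intro p q t u htu
    rw [hsnd p q t u htu]; linear_combination (-r)*htu
  have haff4 : ∀ p q : ℝ×ℝ, ∀ t u : ℝ, t+u=1 →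
      2 - (b - (t•p+u•q).1) = t * (2 - (b - p.1)) + u * (2 - (b - q.1)) := by
    intro p q t u htu
    rw [hfst p q t u htu]; linear_combination (b-2)*htu
  have hone : ∀ p q : ℝ×ℝ, ∀ t u : ℝ, t+u=1 →
      (fun _ : ℝ×ℝ => (1:ℝ)) (t•p+u•q) = t * 1 + u * 1 := by
    intro p q t u htu; simp [htu]
  -- positivity on S
  have px : ∀ p ∈ S, 0 < p.1 := fun p hp => (hmem p hp).1
  have pbx : ∀ p ∈ S, 0 < b - p.1 := fun p hp => by have := (hmem p hp).2.1; linarith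
  have p2x : ∀ p ∈ S, 0 < 2 - p.1 := fun p hp => by have := (hmem p hp).2.1; linarith
  have ps : ∀ p ∈ S, 0 < p.2 := fun p hp => (hmem p hp).2.2.1
  have prs : ∀ p ∈ S, 0 < r - p.2 := fun p hp => by have := (hmem p hp).2.2.2; linarith
  have p2bx : ∀ p ∈ S, 0 < 2 - (b - p.1) := fun p hp => by
    have := (hmem p hp).1; linarith
  have pone : ∀ p ∈ S, (0:ℝ) < (fun _ : ℝ×ℝ => (1:ℝ)) p := fun p _ => one_pos
  -- six convex terms
  have c1 := convexTerm hSconv (fun p => p.1) (fun _ => 1) hfst hone px pone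
  have c2 := convexTerm hSconv (fun p => b - p.1) (fun _ => 1) haff1 hone pbx pone
  have c3 := convexTerm hSconv (fun p => p.2) (fun p => p.1) hsnd hfst ps px
  have c4 := convexTerm hSconv (fun p => p.2) (fun p => 2 - p.1) hsnd haff2 ps p2x
  have c5 := convexTerm hSconv (fun p => r - p.2) (fun p => b - p.1) haff3 haff1 prs pbx
  have c6 := convexTerm hSconv (fun p => r - p.2) (fun p => 2 - (b - p.1)) haff3 haff4 prs p2bx
  have half : (0:ℝ) ≤ 1/2 := by norm_num
  have hG := ((((c1.add c2).add (c3.smul half)).add (c4.smul half)).add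
    (c5.smul half)).add (c6.smul half)
  have hconv : ConvexOn ℝ S F := by
    refine convexOn_congr' hG ?_
    intro p hp
    obtain ⟨hx1, hx2, hs1, hs2⟩ := hmem p hp
    have h1 : p.1 ≠ 0 := ne_of_gt hx1
    have h2 : b - p.1 ≠ 0 := ne_of_gt (pbx p hp)
    have h3 : p.2 ≠ 0 := ne_of_gt hs1
    have h4 : r - p.2 ≠ 0 := ne_of_gt (prs p hp)
    have h5 : 2 - p.1 ≠ 0 := ne_of_gt (p2x p hp)
    have h6 : 2 - (b - p.1) ≠ 0 := ne_of_gt (p2bx p hp)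
    simp only [hF, Pi.add_apply, Pi.smul_apply, smul_eq_mul]
    field_simp
    ring
  refine ⟨hconv, ?_, ?_⟩
  · exact ⟨⟨by linarith, by linarith⟩, ⟨by linarith, by linarith⟩⟩
  · rintro ⟨x, s⟩ ⟨⟨hx1, hx2⟩, ⟨hs1, hs2⟩⟩ hpne
    have hy : 0 < b - x := by linarith
    have htt : 0 < r - s := by linarith
    have hu : 0 < 2 - x := by linarith
    have hv : 0 < 2 - (b - x) := by linarith
    have hb4 : 0 < 4 - b := by linarith
    -- decompose F at (x,s)
    have hFp : F (x, s) = (1/x + 1/(b-x)) + (1/(s*x) + 1/((r-s)*(b-x)))/2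
        + (1/(s*(2-x)) + 1/((r-s)*(2-(b-x))))/2 := by
      rw [hF]
      have h1 : x ≠ 0 := ne_of_gt hx1
      have h2 : b - x ≠ 0 := ne_of_gt hy
      have h3 : s ≠ 0 := ne_of_gt hs1
      have h4 : r - s ≠ 0 := ne_of_gt htt
      have h5 : (2:ℝ) - x ≠ 0 := ne_of_gt hu
      have h6 : (2:ℝ) - (b - x) ≠ 0 := ne_of_gt hv
      simp only
      field_simp
      ring
    have hFc : F (b/2, r/2) = 4/b + (8/(r*b))/2 + (8/(r*(4-b)))/2 := by
      rw [hF]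
      have h1 : b ≠ 0 := ne_of_gt hb0
      have h2 : r ≠ 0 := ne_of_gt hr0
      have h3 : (4:ℝ) - b ≠ 0 := ne_of_gt hb4
      simp only
      rw [show b - b/2 = b/2 by ring, show r - r/2 = r/2 by ring,
        show (2:ℝ) - b/2 = (4-b)/2 by ring,
        show (r/2) * (b/2) * ((4-b)/2) = r*(b*(4-b))/8 by ring, one_div_div, one_div_div]
      field_simp
      ring
    -- the three bounds
    have eA : x + (b - x) = b := by ring
    have A := L1 x (b-x) hx1 hy
    rw [eA] at A
    have eB : (s + (r - s)) * (x + (b - x)) = r*b := by ring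
    have B := L2 s (r-s) x (b-x) hs1 htt hx1 hy
    rw [eB] at B
    have eC : (s + (r - s)) * ((2 - x) + (2 - (b - x))) = r*(4-b) := by ring
    have C := L2 s (r-s) (2-x) (2-(b-x)) hs1 htt hu hv
    rw [eC] at C
    have hcases : x ≠ b/2 ∨ s ≠ r/2 := by
      by_contra h
      push_neg at h
      exact hpne (by rw [h.1, h.2])
    rcases hcases with hxne | hsne
    · have A' := L1s x (b-x) hx1 hy (by intro h; apply hxne; linarith)
      rw [eA] at A'
      rw [hFp, hFc]; linarith
    · have B' := L2s s (r-s) x (b-x) hs1 htt hx1 hy (by intro h; apply hsne; linarith)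
      rw [eB] at B'
      rw [hFp, hFc]; linarith
end

section
/- The function (x,y) ↦ 1/(x·y·(2−y)) is convex on the set {(x,y) ∈ ℝ² : x > 0 and 0 < y < 2}. -/
open Real Set

/-- `(x,y) ↦ 1/(x y (2-y))` is convex on
`{(x,y) : x > 0, 0 < y < 2}`. -/
theorem stmt13 :
    ConvexOn ℝ {p : ℝ × ℝ | 0 < p.1 ∧ 0 < p.2 ∧ p.2 < 2}
      (fun p : ℝ × ℝ => 1 / (p.1 * p.2 * (2 - p.2))) := by
  set s : Set (ℝ × ℝ) := {p : ℝ × ℝ | 0 < p.1 ∧ 0 < p.2 ∧ p.2 < 2} with hs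
  have hconv : Convex ℝ s := by
    have : s = {p : ℝ × ℝ | 0 < p.1} ∩ ({p : ℝ × ℝ | 0 < p.2} ∩ {p : ℝ × ℝ | p.2 < 2}) := by
      ext p; simp [hs, and_assoc]
    rw [this]
    exact (convex_halfSpace_gt (LinearMap.isLinear (LinearMap.fst ℝ ℝ ℝ)) 0).inter
      ((convex_halfSpace_gt (LinearMap.isLinear (LinearMap.snd ℝ ℝ ℝ)) 0).inter
        (convex_halfSpace_lt (LinearMap.isLinear (LinearMap.snd ℝ ℝ ℝ)) 2))
  have hneglog : ConvexOn ℝ (Ioi (0:ℝ)) (fun x => -Real.log x) :=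
    strictConcaveOn_log_Ioi.concaveOn.neg
  -- affine maps
  set A1 : (ℝ × ℝ) →ᵃ[ℝ] ℝ := (LinearMap.fst ℝ ℝ ℝ).toAffineMap
  set A2 : (ℝ × ℝ) →ᵃ[ℝ] ℝ := (LinearMap.snd ℝ ℝ ℝ).toAffineMap
  set A3 : (ℝ × ℝ) →ᵃ[ℝ] ℝ := AffineMap.const ℝ (ℝ × ℝ) (2:ℝ) - (LinearMap.snd ℝ ℝ ℝ).toAffineMap
  have h1 : ConvexOn ℝ s (fun p : ℝ × ℝ => -Real.log p.1) :=
    (hneglog.comp_affineMap A1).subset (fun p hp => hp.1) hconv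
  have h2 : ConvexOn ℝ s (fun p : ℝ × ℝ => -Real.log p.2) :=
    (hneglog.comp_affineMap A2).subset (fun p hp => hp.2.1) hconv
  have h3 : ConvexOn ℝ s (fun p : ℝ × ℝ => -Real.log (2 - p.2)) := by
    refine (hneglog.comp_affineMap A3).subset (fun p hp => ?_) hconv
    have : (0:ℝ) < 2 - p.2 := by linarith [hp.2.2]
    simpa [A3, Set.mem_preimage, sub_eq_add_neg] using this
  have hg : ConvexOn ℝ s (fun p : ℝ × ℝ =>
      -Real.log p.1 + (-Real.log p.2 + -Real.log (2 - p.2))) :=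
    h1.add (h2.add h3)
  have hexp : ConvexOn ℝ s (Real.exp ∘ (fun p : ℝ × ℝ =>
      -Real.log p.1 + (-Real.log p.2 + -Real.log (2 - p.2)))) := by
    refine ⟨hconv, fun x hx y hy a b ha hb hab => ?_⟩
    calc Real.exp _ ≤ Real.exp (a • (-Real.log x.1 + (-Real.log x.2 + -Real.log (2 - x.2)))
          + b • (-Real.log y.1 + (-Real.log y.2 + -Real.log (2 - y.2)))) :=
        Real.exp_le_exp.2 (hg.2 hx hy ha hb hab)
      _ ≤ _ := convexOn_exp.2 (mem_univ _) (mem_univ _) ha hb hab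
  exact hexp.congr (fun p hp => by
    have hx : (0:ℝ) < p.1 := hp.1
    have hy : (0:ℝ) < p.2 := hp.2.1
    have hz : (0:ℝ) < 2 - p.2 := by linarith [hp.2.2]
    simp only [Function.comp]
    rw [Real.exp_add, Real.exp_add, Real.exp_neg, Real.exp_neg, Real.exp_neg,
      Real.exp_log hx, Real.exp_log hy, Real.exp_log hz]
    field_simp)
end
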